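/- Let k ≥ 1 and j be integers with 0 ≤ j ≤ k−1, let a, b ∈ ℤ, and let γ be a positively oriented circle in ℂ passing through neither 1 nor −1. Then ∮_γ f^{(k)}(z) · z^j dz = 0, where f(z) = (z−1)^{k+a}(z+1)^{k+b} (integer, possibly negative, powers) and f^{(k)} denotes the k-th derivative of f on ℂ ∖ {1, −1}. Equivalently, the Jacobi polynomial with (possibly negative) integer parameters defined by the Rodrigues formula P_k^{(a,b)}(z) = (2^k k!)⁻¹ (z−1)^{−a}(z+1)^{−b} f^{(k)}(z) satisfies the non-Hermitian contour orthogonality ∮_γ P_k^{(a,b)}(z) (z−1)^a (z+1)^b z^j dz = 0 for 0 ≤ j ≤ k−1. -/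

import Mathlib

open Metric Set

private lemma jacobi_aux_analytic (f : ℂ → ℂ)
    (hf : AnalyticOnNhd ℂ f ({1, -1} : Set ℂ)ᶜ) (m : ℕ) :
    AnalyticOnNhd ℂ (iteratedDeriv m f) ({1, -1} : Set ℂ)ᶜ := by
  induction m with
  | zero => simpa using hf
  | succ n ih =>
    rw [iteratedDeriv_succ]
    exact ih.deriv

private lemma jacobi_aux_key (f : ℂ → ℂ)
    (hf : AnalyticOnNhd ℂ f ({1, -1} : Set ℂ)ᶜ)
    (c : ℂ) (R : ℝ) (hR : 0 < R) (hsub : sphere c R ⊆ ({1, -1} : Set ℂ)ᶜ) :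
    ∀ j k : ℕ, j < k → (∮ z in C(c, R), iteratedDeriv k f z * z ^ j) = 0 := by
  have hU : IsOpen (({1, -1} : Set ℂ)ᶜ) := by
    simp only [Set.insert_eq]
    exact (isClosed_singleton.union isClosed_singleton).isOpen_compl
  intro j
  induction j with
  | zero =>
    rintro (_ | m) hk
    · omega
    · have h0 : (∮ z in C(c, R), iteratedDeriv (m + 1) f z * z ^ 0) =
          ∮ z in C(c, R), iteratedDeriv (m + 1) f z :=
        circleIntegral.integral_congr hR.le fun z _ => by simp
      rw [h0]
      refine circleIntegral.integral_eq_zero_of_hasDerivWithinAt (f := iteratedDeriv m f) hR.le fun z hz => ?_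
      have hz' := hsub hz
      have hd : HasDerivAt (iteratedDeriv m f) (iteratedDeriv (m + 1) f z) z := by
        rw [iteratedDeriv_succ]
        exact ((jacobi_aux_analytic f hf m z hz').differentiableAt).hasDerivAt
      exact hd.hasDerivWithinAt
  | succ j ih =>
    rintro (_ | m) hk
    · omega
    · have hjm : j < m := by omega
      -- derivative of the product
      have hder : ∀ z ∈ sphere c R,
          HasDerivWithinAt (fun w => iteratedDeriv m f w * w ^ (j + 1))
            (iteratedDeriv (m + 1) f z * z ^ (j + 1) +
              ((j : ℂ) + 1) • (iteratedDeriv m f z * z ^ j)) (sphere c R) z := by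
        intro z hz
        have hz' := hsub hz
        have hd : HasDerivAt (iteratedDeriv m f) (iteratedDeriv (m + 1) f z) z := by
          rw [iteratedDeriv_succ]
          exact ((jacobi_aux_analytic f hf m z hz').differentiableAt).hasDerivAt
        have hp : HasDerivAt (fun w : ℂ => w ^ (j + 1)) (((j : ℂ) + 1) * z ^ j) z := by
          simpa using hasDerivAt_pow (j + 1) z
        have := hd.fun_mul hp
        refine HasDerivAt.hasDerivWithinAt ?_
        refine this.congr_deriv ?_
        simp only [smul_eq_mul]
        ring
      have hzero : (∮ z in C(c, R), (iteratedDeriv (m + 1) f z * z ^ (j + 1) +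
          ((j : ℂ) + 1) • (iteratedDeriv m f z * z ^ j))) = 0 :=
        circleIntegral.integral_eq_zero_of_hasDerivWithinAt hR.le hder
      -- integrability
      have hcont : ∀ n : ℕ, ∀ p : ℕ, CircleIntegrable
          (fun z => iteratedDeriv n f z * z ^ p) c R := by
        intro n p
        refine ContinuousOn.circleIntegrable hR.le ?_
        exact (((jacobi_aux_analytic f hf n).continuousOn).mono hsub).mul
          (continuousOn_pow p)
      have hint1 := hcont (m + 1) (j + 1)
      have hint2 : CircleIntegrable
          (fun z => ((j : ℂ) + 1) • (iteratedDeriv m f z * z ^ j)) c R := by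
        refine ContinuousOn.circleIntegrable hR.le ?_
        exact ((((jacobi_aux_analytic f hf m).continuousOn).mono hsub).mul
          (continuousOn_pow j)).const_smul ((j : ℂ) + 1)
      have hsum : CircleIntegrable (fun z => iteratedDeriv (m + 1) f z * z ^ (j + 1) +
          ((j : ℂ) + 1) • (iteratedDeriv m f z * z ^ j)) c R := hint1.add hint2
      have hsplit : (∮ z in C(c, R), iteratedDeriv (m + 1) f z * z ^ (j + 1)) =
          (∮ z in C(c, R), (iteratedDeriv (m + 1) f z * z ^ (j + 1) +
            ((j : ℂ) + 1) • (iteratedDeriv m f z * z ^ j))) -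
          (∮ z in C(c, R), ((j : ℂ) + 1) • (iteratedDeriv m f z * z ^ j)) := by
        rw [← circleIntegral.integral_sub hsum hint2]
        congr 1
        funext z
        simp only [smul_eq_mul]
        ring
      rw [hsplit, hzero, circleIntegral.integral_smul, ih m hjm, smul_zero, sub_zero]

/-- Non-Hermitian contour orthogonality of Jacobi polynomials with integer (possibly
negative) parameters, via the Rodrigues formula.  Let `f(z) = (z-1)^{k+a} (z+1)^{k+b}`
(integer powers) and let `f^{(k)}` be its `k`-th derivative.  For every circle `γ`
passing through neither `1` nor `-1`, and every `0 ≤ j ≤ k-1`: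
`∮_γ f^{(k)}(z) z^j dz = 0`, and equivalently, with
`P_k^{(a,b)}(z) = (2^k k!)⁻¹ (z-1)^{-a} (z+1)^{-b} f^{(k)}(z)`,
`∮_γ P_k^{(a,b)}(z) (z-1)^a (z+1)^b z^j dz = 0`. -/
theorem jacobi_contour_orthogonality (k : ℕ) (hk : 1 ≤ k) (j : ℕ) (hj : j < k)
    (a b : ℤ) (c : ℂ) (R : ℝ) (hR : 0 < R)
    (h1 : (1 : ℂ) ∉ Metric.sphere c R) (hm1 : (-1 : ℂ) ∉ Metric.sphere c R) :
    ((∮ z in C(c, R),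
        iteratedDeriv k
            (fun w : ℂ => (w - 1) ^ ((k : ℤ) + a) * (w + 1) ^ ((k : ℤ) + b)) z *
          z ^ j) = 0) ∧
    ((∮ z in C(c, R),
        (((2 : ℂ) ^ k * (Nat.factorial k : ℂ))⁻¹ * (z - 1) ^ (-a) * (z + 1) ^ (-b) *
            iteratedDeriv k
              (fun w : ℂ => (w - 1) ^ ((k : ℤ) + a) * (w + 1) ^ ((k : ℤ) + b)) z) *
          ((z - 1) ^ a * (z + 1) ^ b * z ^ j)) = 0) := by
  set f : ℂ → ℂ := fun w : ℂ => (w - 1) ^ ((k : ℤ) + a) * (w + 1) ^ ((k : ℤ) + b) with hfdef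
  have hsub : sphere c R ⊆ ({1, -1} : Set ℂ)ᶜ := by
    intro z hz
    simp only [Set.mem_compl_iff, Set.mem_insert_iff, Set.mem_singleton_iff, not_or]
    constructor
    · rintro rfl; exact h1 hz
    · rintro rfl; exact hm1 hz
  have hf : AnalyticOnNhd ℂ f ({1, -1} : Set ℂ)ᶜ := by
    refine DifferentiableOn.analyticOnNhd ?_ (by
      simp only [Set.insert_eq]
      exact (isClosed_singleton.union isClosed_singleton).isOpen_compl)
    intro z hz
    simp only [Set.mem_compl_iff, Set.mem_insert_iff, Set.mem_singleton_iff, not_or] at hz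
    refine DifferentiableAt.differentiableWithinAt ?_
    have h1' : (z - 1) ≠ 0 := sub_ne_zero.2 hz.1
    have h2' : (z + 1) ≠ 0 := by
      intro h; apply hz.2; linear_combination h
    exact ((differentiableAt_id.sub_const (1 : ℂ)).zpow (Or.inl h1')).mul
      ((differentiableAt_id.add_const (1 : ℂ)).zpow (Or.inl h2'))
  have hmain := jacobi_aux_key f hf c R hR hsub j k hj
  refine ⟨hmain, ?_⟩
  have : (∮ z in C(c, R),
      (((2 : ℂ) ^ k * (Nat.factorial k : ℂ))⁻¹ * (z - 1) ^ (-a) * (z + 1) ^ (-b) *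
          iteratedDeriv k f z) * ((z - 1) ^ a * (z + 1) ^ b * z ^ j)) =
      ∮ z in C(c, R), ((2 : ℂ) ^ k * (Nat.factorial k : ℂ))⁻¹ •
        (iteratedDeriv k f z * z ^ j) := by
    refine circleIntegral.integral_congr hR.le fun z hz => ?_
    have hz' := hsub hz
    simp only [Set.mem_compl_iff, Set.mem_insert_iff, Set.mem_singleton_iff, not_or] at hz'
    have h1' : (z - 1) ≠ 0 := sub_ne_zero.2 hz'.1
    have h2' : (z + 1) ≠ 0 := by
      intro h; apply hz'.2; linear_combination h
    have e1 : (z - 1) ^ (-a) * (z - 1) ^ a = 1 := by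
      rw [← zpow_add₀ h1']; simp
    have e2 : (z + 1) ^ (-b) * (z + 1) ^ b = 1 := by
      rw [← zpow_add₀ h2']; simp
    simp only [smul_eq_mul]
    calc (((2 : ℂ) ^ k * (Nat.factorial k : ℂ))⁻¹ * (z - 1) ^ (-a) * (z + 1) ^ (-b) *
          iteratedDeriv k f z) * ((z - 1) ^ a * (z + 1) ^ b * z ^ j)
        = ((2 : ℂ) ^ k * (Nat.factorial k : ℂ))⁻¹ * (iteratedDeriv k f z * z ^ j) *
            (((z - 1) ^ (-a) * (z - 1) ^ a) * ((z + 1) ^ (-b) * (z + 1) ^ b)) := by ring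
      _ = _ := by rw [e1, e2]; ring
  rw [this, circleIntegral.integral_smul, hmain, smul_zero]
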